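/- Let W : [0,∞) → ℝ be continuous with exponential growth bound, and for r, δ ≥ 0 define W_δ via the series W_δ = Σ_{k≥0} δ^k W^{*,k+1}. Then for r ≠ δ, the convolution identity (W_r * W_δ)(x) = (W_r(x) − W_δ(x))/(r − δ) holds for all x ≥ 0, where (f*g)(x) = ∫₀^x f(x−y)g(y) dy. -/

import Mathlib

open Real

/-- Iterated convolution powers on `[0,∞)`: `iterConv W k = W^{*,k+1}`. -/
noncomputable def iterConv (W : ℝ → ℝ) : ℕ → ℝ → ℝ
  | 0 => W
  | (k + 1) => fun x => ∫ y in (0 : ℝ)..x, iterConv W k (x - y) * W y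

open intervalIntegral MeasureTheory Set

lemma iterConv_cont (W : ℝ → ℝ) (hW : Continuous W) : ∀ k, Continuous (iterConv W k) := by
  intro k
  induction k with
  | zero => exact hW
  | succ k ih =>
    show Continuous fun x => ∫ y in (0:ℝ)..x, iterConv W k (x - y) * W y
    exact intervalIntegral.continuous_parametric_intervalIntegral_of_continuous
      (f := fun x y => iterConv W k (x - y) * W y)
      (by fun_prop) continuous_id

lemma iterConv_bound (W : ℝ → ℝ) (hW : Continuous W) (C α : ℝ)
    (hbd : ∀ x : ℝ, 0 ≤ x → |W x| ≤ C * Real.exp (α * x)) :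
    ∀ k, ∀ x : ℝ, 0 ≤ x →
      |iterConv W k x| ≤ C ^ (k + 1) * x ^ k / (Nat.factorial k) * Real.exp (α * x) := by
  have hC : 0 ≤ C := by
    have h := hbd 0 le_rfl
    simp at h
    exact (abs_nonneg _).trans h
  intro k
  induction k with
  | zero => intro x hx; simpa [iterConv] using hbd x hx
  | succ k ih =>
    intro x hx
    have key : ∀ y ∈ Set.uIoc (0:ℝ) x,
        ‖iterConv W k (x - y) * W y‖ ≤
          (C ^ (k + 1) * (x - y) ^ k / (Nat.factorial k) * Real.exp (α * x)) * C := by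
      intro y hy
      rw [Set.uIoc_of_le hx] at hy
      have hy0 : 0 ≤ y := le_of_lt hy.1
      have hyx : 0 ≤ x - y := by linarith [hy.2]
      have h1 := ih (x - y) hyx
      have h2 := hbd y hy0
      calc ‖iterConv W k (x - y) * W y‖ = |iterConv W k (x - y)| * |W y| := abs_mul _ _
        _ ≤ (C ^ (k + 1) * (x - y) ^ k / (Nat.factorial k) * Real.exp (α * (x - y)))
              * (C * Real.exp (α * y)) := by
            apply mul_le_mul h1 h2 (abs_nonneg _)
            positivity
        _ = (C ^ (k + 1) * (x - y) ^ k / (Nat.factorial k) * Real.exp (α * x)) * C := by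
            rw [show α * x = α * (x - y) + α * y by ring, Real.exp_add]; ring
    have hgint : IntervalIntegrable
        (fun y => (C ^ (k + 1) * (x - y) ^ k / (Nat.factorial k) * Real.exp (α * x)) * C)
        MeasureTheory.volume 0 x := by
      apply Continuous.intervalIntegrable; fun_prop
    have hb := intervalIntegral.norm_integral_le_abs_of_norm_le
      (f := fun y => iterConv W k (x - y) * W y) (MeasureTheory.ae_restrict_of_forall_mem
        measurableSet_uIoc key) hgint
    have hcomp : (∫ y in (0:ℝ)..x, (C ^ (k + 1) * (x - y) ^ k / (Nat.factorial k)
          * Real.exp (α * x)) * C)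
        = C ^ (k + 2) * x ^ (k+1) / (Nat.factorial (k+1)) * Real.exp (α * x) := by
      have : ∀ y : ℝ, (C ^ (k + 1) * (x - y) ^ k / (Nat.factorial k) * Real.exp (α * x)) * C
          = (C ^ (k + 2) * Real.exp (α * x) / (Nat.factorial k)) * (x - y) ^ k := by
        intro y; ring
      simp_rw [this]
      rw [intervalIntegral.integral_const_mul]
      have hsub : (∫ y in (0:ℝ)..x, (x - y) ^ k) = x ^ (k+1) / (k+1) := by
        rw [intervalIntegral.integral_comp_sub_left (fun y => y ^ k) x]
        simp [integral_pow]
      rw [hsub]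
      rw [Nat.factorial_succ]
      have h1 : (Nat.factorial k : ℝ) ≠ 0 := Nat.cast_ne_zero.mpr (Nat.factorial_ne_zero k)
      have h2 : ((k:ℝ) + 1) ≠ 0 := by positivity
      push_cast
      field_simp
    rw [hcomp] at hb
    calc |iterConv W (k+1) x| ≤ |C ^ (k + 2) * x ^ (k+1) / (Nat.factorial (k+1)) * Real.exp (α * x)| := hb
      _ = C ^ (k + 1 + 1) * x ^ (k+1) / (Nat.factorial (k+1)) * Real.exp (α * x) := by
          rw [abs_of_nonneg]; positivity

section Main
variable {W : ℝ → ℝ} {C α : ℝ}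

lemma term_le (hW : Continuous W) (hbd : ∀ x : ℝ, 0 ≤ x → |W x| ≤ C * Real.exp (α * x))
    {q x y : ℝ} (hq : 0 ≤ q) (hy : y ∈ Set.Icc 0 x) (k : ℕ) :
    |q ^ k * iterConv W k y| ≤
      (C * Real.exp (|α| * x)) * ((q * C * x) ^ k / (Nat.factorial k)) := by
  have hC : 0 ≤ C := by
    have h := hbd 0 le_rfl
    simp at h
    exact (abs_nonneg _).trans h
  have hx : 0 ≤ x := le_trans hy.1 hy.2
  have h1 := iterConv_bound W hW C α hbd k y hy.1
  have hexp : Real.exp (α * y) ≤ Real.exp (|α| * x) := by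
    apply Real.exp_le_exp.mpr
    calc α * y ≤ |α * y| := le_abs_self _
      _ = |α| * |y| := abs_mul _ _
      _ = |α| * y := by rw [abs_of_nonneg hy.1]
      _ ≤ |α| * x := by apply mul_le_mul_of_nonneg_left hy.2 (abs_nonneg _)
  have hyk : y ^ k ≤ x ^ k := pow_le_pow_left₀ hy.1 hy.2 k
  calc |q ^ k * iterConv W k y| = q ^ k * |iterConv W k y| := by
        rw [abs_mul, abs_of_nonneg (pow_nonneg hq k)]
    _ ≤ q ^ k * (C ^ (k + 1) * y ^ k / (Nat.factorial k) * Real.exp (α * y)) := by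
        apply mul_le_mul_of_nonneg_left h1 (pow_nonneg hq k)
    _ ≤ q ^ k * (C ^ (k + 1) * x ^ k / (Nat.factorial k) * Real.exp (|α| * x)) := by
        apply mul_le_mul_of_nonneg_left _ (pow_nonneg hq k)
        apply mul_le_mul _ hexp (Real.exp_nonneg _) (by positivity)
        gcongr
    _ = (C * Real.exp (|α| * x)) * ((q * C * x) ^ k / (Nat.factorial k)) := by
        rw [mul_pow, mul_pow]
        ring
  
lemma summable_term (hW : Continuous W) (hbd : ∀ x : ℝ, 0 ≤ x → |W x| ≤ C * Real.exp (α * x))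
    {q y : ℝ} (hq : 0 ≤ q) (hy : 0 ≤ y) :
    Summable (fun k : ℕ => q ^ k * iterConv W k y) := by
  apply Summable.of_abs
  apply Summable.of_nonneg_of_le (fun k => abs_nonneg _)
    (fun k => term_le hW hbd hq (Set.mem_Icc.mpr ⟨hy, le_refl y⟩) k)
  exact ((Real.summable_pow_div_factorial _).mul_left _)

lemma Wq_le (hW : Continuous W) (hbd : ∀ x : ℝ, 0 ≤ x → |W x| ≤ C * Real.exp (α * x))
    {q x y : ℝ} (hq : 0 ≤ q) (hy : y ∈ Set.Icc 0 x) :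
    |∑' k : ℕ, q ^ k * iterConv W k y| ≤
      ∑' k : ℕ, (C * Real.exp (|α| * x)) * ((q * C * x) ^ k / (Nat.factorial k)) := by
  have hs : Summable (fun k : ℕ => |q ^ k * iterConv W k y|) := by
    apply Summable.of_nonneg_of_le (fun k => abs_nonneg _) (fun k => term_le hW hbd hq hy k)
    exact ((Real.summable_pow_div_factorial _).mul_left _)
  have h0 : ‖∑' k : ℕ, q ^ k * iterConv W k y‖ ≤ ∑' k : ℕ, ‖q ^ k * iterConv W k y‖ :=
    norm_tsum_le_tsum_norm (by simp only [Real.norm_eq_abs]; exact hs)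
  rw [Real.norm_eq_abs] at h0
  simp_rw [Real.norm_eq_abs] at h0
  exact h0.trans (Summable.tsum_le_tsum (fun k => term_le hW hbd hq hy k) hs
          ((Real.summable_pow_div_factorial _).mul_left _))

lemma Wq_contOn (hW : Continuous W) (hbd : ∀ x : ℝ, 0 ≤ x → |W x| ≤ C * Real.exp (α * x))
    {q x : ℝ} (hq : 0 ≤ q) :
    ContinuousOn (fun y => ∑' k : ℕ, q ^ k * iterConv W k y) (Set.Icc 0 x) := by
  apply continuousOn_tsum (u := fun k => (C * Real.exp (|α| * x)) * ((q * C * x) ^ k / (Nat.factorial k)))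
  · exact fun k => (continuous_const.mul (iterConv_cont W hW k)).continuousOn
  · exact ((Real.summable_pow_div_factorial _).mul_left _)
  · intro k y hy
    simp only [Real.norm_eq_abs]
    exact term_le hW hbd hq hy k

lemma conv_tsum_W (hW : Continuous W) (hbd : ∀ x : ℝ, 0 ≤ x → |W x| ≤ C * Real.exp (α * x))
    {q x : ℝ} (hq : 0 ≤ q) (hx : 0 ≤ x) :
    (∫ y in (0:ℝ)..x, (∑' k : ℕ, q ^ k * iterConv W k (x - y)) * W y)
      = ∑' k : ℕ, q ^ k * iterConv W (k + 1) x := by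
  have hC : 0 ≤ C := by
    have h := hbd 0 le_rfl
    simp at h
    exact (abs_nonneg _).trans h
  rw [intervalIntegral.integral_of_le hx]
  have hrw : ∀ y : ℝ, (∑' k : ℕ, q ^ k * iterConv W k (x - y)) * W y
      = ∑' k : ℕ, q ^ k * iterConv W k (x - y) * W y := fun y => (tsum_mul_right).symm
  simp_rw [hrw]
  have hint : ∀ k : ℕ, Integrable (fun y => q ^ k * iterConv W k (x - y) * W y)
      (MeasureTheory.volume.restrict (Set.Ioc 0 x)) := by
    intro k
    apply Continuous.integrableOn_Ioc
    have := iterConv_cont W hW k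
    fun_prop
  have hWb : ∀ y ∈ Set.Ioc (0:ℝ) x, |W y| ≤ C * Real.exp (|α| * x) := by
    intro y hy
    refine (hbd y hy.1.le).trans ?_
    have : α * y ≤ |α| * x := by
      calc α * y ≤ |α * y| := le_abs_self _
        _ = |α| * |y| := abs_mul _ _
        _ = |α| * y := by rw [abs_of_nonneg hy.1.le]
        _ ≤ |α| * x := by apply mul_le_mul_of_nonneg_left hy.2 (abs_nonneg _)
    exact mul_le_mul_of_nonneg_left (Real.exp_le_exp.mpr this) hC
  have hnorm : ∀ k : ℕ, (∫ y in Set.Ioc (0:ℝ) x, ‖q ^ k * iterConv W k (x - y) * W y‖)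
      ≤ x * ((C * Real.exp (|α| * x)) * ((q * C * x) ^ k / (Nat.factorial k))
          * (C * Real.exp (|α| * x))) := by
    intro k
    have hmono : ∀ y ∈ Set.Ioc (0:ℝ) x, ‖q ^ k * iterConv W k (x - y) * W y‖
        ≤ (C * Real.exp (|α| * x)) * ((q * C * x) ^ k / (Nat.factorial k))
          * (C * Real.exp (|α| * x)) := by
      intro y hy
      rw [Real.norm_eq_abs, abs_mul]
      have h1 : x - y ∈ Set.Icc 0 x := ⟨by linarith [hy.2], by linarith [hy.1.le, hy.1]⟩
      exact mul_le_mul (term_le hW hbd hq h1 k) (hWb y hy) (abs_nonneg _) (by positivity)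
    calc (∫ y in Set.Ioc (0:ℝ) x, ‖q ^ k * iterConv W k (x - y) * W y‖)
        ≤ ∫ _ in Set.Ioc (0:ℝ) x, ((C * Real.exp (|α| * x)) * ((q * C * x) ^ k / (Nat.factorial k))
            * (C * Real.exp (|α| * x))) := by
          apply MeasureTheory.setIntegral_mono_on (hint k).norm
            (integrableOn_const measure_Ioc_lt_top.ne)
            measurableSet_Ioc hmono
      _ = x * ((C * Real.exp (|α| * x)) * ((q * C * x) ^ k / (Nat.factorial k))
            * (C * Real.exp (|α| * x))) := by
          rw [MeasureTheory.setIntegral_const, Real.volume_real_Ioc, smul_eq_mul, sub_zero,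
            max_eq_left hx]
  have hsum : Summable (fun k : ℕ => ∫ y in Set.Ioc (0:ℝ) x,
      ‖q ^ k * iterConv W k (x - y) * W y‖) := by
    apply Summable.of_nonneg_of_le
      (fun k => MeasureTheory.integral_nonneg (fun y => norm_nonneg _)) hnorm
    apply Summable.mul_left
    apply Summable.mul_right
    exact ((Real.summable_pow_div_factorial _).mul_left _)
  have key := MeasureTheory.integral_tsum_of_summable_integral_norm
    (F := fun (k : ℕ) (y : ℝ) => q ^ k * iterConv W k (x - y) * W y) hint hsum
  rw [← key]
  apply tsum_congr
  intro k
  have : ∀ y : ℝ, q ^ k * iterConv W k (x - y) * W y = q ^ k * (iterConv W k (x - y) * W y) :=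
    fun y => mul_assoc _ _ _
  simp_rw [this]
  rw [MeasureTheory.integral_const_mul]
  congr 1
  rw [show iterConv W (k+1) x = ∫ y in (0:ℝ)..x, iterConv W k (x - y) * W y from rfl,
    intervalIntegral.integral_of_le hx]

lemma Wq_succ (hW : Continuous W) (hbd : ∀ x : ℝ, 0 ≤ x → |W x| ≤ C * Real.exp (α * x))
    {q x : ℝ} (hq : 0 ≤ q) (hx : 0 ≤ x) :
    (∑' k : ℕ, q ^ k * iterConv W k x) = W x + q * ∑' k : ℕ, q ^ k * iterConv W (k + 1) x := by
  rw [Summable.tsum_eq_zero_add (summable_term hW hbd hq hx)]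
  simp only [pow_zero, one_mul]
  show W x + (∑' k : ℕ, q ^ (k + 1) * iterConv W (k + 1) x) = _
  congr 1
  rw [← tsum_mul_left]
  apply tsum_congr
  intro k
  rw [pow_succ']
  ring

end Main

lemma conv_assoc (f g h : ℝ → ℝ) (hf : Continuous f) (hg : Continuous g) (hh : Continuous h)
    (x : ℝ) (hx : 0 ≤ x) :
    (∫ y in (0:ℝ)..x, f (x - y) * ∫ z in (0:ℝ)..y, g (y - z) * h z)
      = ∫ z in (0:ℝ)..x, (∫ u in (0:ℝ)..(x - z), f (x - z - u) * g u) * h z := by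
  set G : ℝ × ℝ → ℝ := fun p => f (x - p.1) * (g (p.1 - p.2) * h p.2) with hG
  set Φ : ℝ × ℝ → ℝ := fun p => ({p : ℝ × ℝ | p.2 ≤ p.1}).indicator G p with hΦ
  have hGc : Continuous G := by fun_prop
  have hmeas : MeasurableSet {p : ℝ × ℝ | p.2 ≤ p.1} :=
    measurableSet_le measurable_snd measurable_fst
  have hΦint : Integrable (Function.uncurry fun y z => Φ (y, z))
      ((volume.restrict (Ioc 0 x)).prod (volume.restrict (Ioc 0 x))) := by
    have : (Function.uncurry fun y z => Φ (y, z)) = Φ := rfl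
    rw [this, Measure.prod_restrict]
    have hGint : IntegrableOn G (Ioc 0 x ×ˢ Ioc 0 x) (volume.prod volume) := by
      apply IntegrableOn.mono_set (t := Icc 0 x ×ˢ Icc 0 x)
      · rw [← Measure.volume_eq_prod]
        exact hGc.continuousOn.integrableOn_compact (isCompact_Icc.prod isCompact_Icc)
      · exact Set.prod_mono Ioc_subset_Icc_self Ioc_subset_Icc_self
    exact hGint.indicator hmeas
  -- step 1: LHS as a double set integral
  have step1 : (∫ y in (0:ℝ)..x, f (x - y) * ∫ z in (0:ℝ)..y, g (y - z) * h z)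
      = ∫ y in Ioc (0:ℝ) x, ∫ z in Ioc (0:ℝ) x, Φ (y, z) := by
    rw [intervalIntegral.integral_of_le hx]
    apply setIntegral_congr_fun measurableSet_Ioc
    intro y hy
    beta_reduce
    have hy0 : (0:ℝ) ≤ y := hy.1.le
    have hinner : (∫ z in Ioc (0:ℝ) x, Φ (y, z)) = ∫ z in Ioc (0:ℝ) y, G (y, z) := by
      have : ∀ z : ℝ, Φ (y, z) = (Iic y).indicator (fun z => G (y, z)) z := by
        intro z
        simp only [hΦ, Set.indicator_apply, Set.mem_setOf_eq, Set.mem_Iic]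
      simp_rw [this]
      rw [MeasureTheory.integral_indicator measurableSet_Iic, Measure.restrict_restrict measurableSet_Iic]
      have hseteq : Iic y ∩ Ioc 0 x = Ioc 0 y := by
        ext z
        simp only [Set.mem_inter_iff, Set.mem_Iic, Set.mem_Ioc]
        constructor
        · rintro ⟨h1, h2, h3⟩; exact ⟨h2, h1⟩
        · rintro ⟨h1, h2⟩; exact ⟨h2, h1, h2.trans hy.2⟩
      rw [hseteq]
    rw [hinner, intervalIntegral.integral_of_le hy0, ← MeasureTheory.integral_const_mul]
  -- step 2: swap
  have step2 : (∫ y in Ioc (0:ℝ) x, ∫ z in Ioc (0:ℝ) x, Φ (y, z))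
      = ∫ z in Ioc (0:ℝ) x, ∫ y in Ioc (0:ℝ) x, Φ (y, z) :=
    MeasureTheory.integral_integral_swap hΦint
  -- step 3: identify with RHS
  have step3 : (∫ z in Ioc (0:ℝ) x, ∫ y in Ioc (0:ℝ) x, Φ (y, z))
      = ∫ z in (0:ℝ)..x, (∫ u in (0:ℝ)..(x - z), f (x - z - u) * g u) * h z := by
    rw [intervalIntegral.integral_of_le hx]
    apply setIntegral_congr_fun measurableSet_Ioc
    intro z hz
    beta_reduce
    have hzx : z ≤ x := hz.2
    have hinner : (∫ y in Ioc (0:ℝ) x, Φ (y, z)) = ∫ y in Ioc z x, G (y, z) := by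
      have : ∀ y : ℝ, Φ (y, z) = (Ici z).indicator (fun y => G (y, z)) y := by
        intro y
        simp only [hΦ, Set.indicator_apply, Set.mem_setOf_eq, Set.mem_Ici]
      simp_rw [this]
      rw [MeasureTheory.integral_indicator measurableSet_Ici, Measure.restrict_restrict measurableSet_Ici]
      have hseteq : Ici z ∩ Ioc 0 x = Icc z x := by
        ext y
        simp only [Set.mem_inter_iff, Set.mem_Ici, Set.mem_Ioc, Set.mem_Icc]
        constructor
        · rintro ⟨h1, _, h3⟩; exact ⟨h1, h3⟩
        · rintro ⟨h1, h2⟩; exact ⟨h1, hz.1.trans_le h1, h2⟩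
      rw [hseteq, MeasureTheory.integral_Icc_eq_integral_Ioc]
    rw [hinner]
    have : (∫ y in Ioc z x, G (y, z)) = ∫ y in z..x, f (x - y) * g (y - z) * h z := by
      rw [intervalIntegral.integral_of_le hzx]
      apply setIntegral_congr_fun measurableSet_Ioc
      intro y _
      simp only [hG]; ring
    rw [this, intervalIntegral.integral_mul_const]
    congr 1
    have hcomp : (∫ y in z..x, f (x - y) * g (y - z))
        = ∫ y in z..x, (fun u => f (x - z - u) * g u) (y - z) := by
      apply intervalIntegral.integral_congr
      intro y _
      simp only []
      congr 2
      ring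
    rw [hcomp, intervalIntegral.integral_comp_sub_right (fun u => f (x - z - u) * g u) z,
      sub_self]
  rw [step1, step2, step3]

lemma S_zero (W : ℝ → ℝ) (y : ℝ) : (∑' k : ℕ, (0:ℝ) ^ k * iterConv W k y) = W y := by
  rw [tsum_eq_single 0]
  · simp [iterConv]
  · intro k hk
    simp [zero_pow hk]

lemma comm_int (W F : ℝ → ℝ) (t : ℝ) :
    (∫ y in (0:ℝ)..t, W (t - y) * F y) = ∫ y in (0:ℝ)..t, F (t - y) * W y := by
  have h := intervalIntegral.integral_comp_sub_left (a := (0:ℝ)) (b := t)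
    (fun y => F (t - y) * W y) t
  simp only [sub_sub_cancel, sub_zero, sub_self] at h
  rw [← h]
  apply intervalIntegral.integral_congr
  intro y _
  beta_reduce
  ring


/-- Convolution identity `W_r * W_δ = (W_r − W_δ)/(r − δ)` for the scale functions
defined by the series `W_q = Σ q^k W^{*,k+1}`. -/
theorem scale_convolution_identity (W : ℝ → ℝ) (hW : Continuous W)
    (C α : ℝ) (hbd : ∀ x : ℝ, 0 ≤ x → |W x| ≤ C * Real.exp (α * x))
    (r δ : ℝ) (hr : 0 ≤ r) (hδ : 0 ≤ δ) (hne : r ≠ δ) :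
    let Wq : ℝ → ℝ → ℝ := fun q x => ∑' k : ℕ, q ^ k * iterConv W k x
    ∀ x : ℝ, 0 ≤ x →
      (∫ y in (0 : ℝ)..x, Wq r (x - y) * Wq δ y) = (Wq r x - Wq δ x) / (r - δ) := by
  intro Wq x hx
  set S : ℝ → ℝ → ℝ := fun q y => ∑' k : ℕ, q ^ k * iterConv W k y with hS
  set S1 : ℝ → ℝ → ℝ := fun q y => ∑' k : ℕ, q ^ k * iterConv W (k + 1) y with hS1
  show (∫ y in (0 : ℝ)..x, S r (x - y) * S δ y) = (S r x - S δ x) / (r - δ)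
  -- basic facts
  have F1 : ∀ q t : ℝ, 0 ≤ q → 0 ≤ t →
      (∫ y in (0:ℝ)..t, S q (t - y) * W y) = S1 q t := fun q t hq ht =>
    conv_tsum_W hW hbd hq ht
  have F1' : ∀ q t : ℝ, 0 ≤ q → 0 ≤ t →
      (∫ y in (0:ℝ)..t, W (t - y) * S q y) = S1 q t := by
    intro q t hq ht
    rw [comm_int]
    exact F1 q t hq ht
  have F2 : ∀ q t : ℝ, 0 ≤ q → 0 ≤ t → S q t = W t + q * S1 q t := fun q t hq ht =>
    Wq_succ hW hbd hq ht
  have hcont : ∀ q : ℝ, 0 ≤ q → ContinuousOn (S q) (Set.Icc 0 x) := fun q hq =>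
    Wq_contOn hW hbd hq
  rcases eq_or_ne δ 0 with hδ0 | hδ0
  · -- δ = 0
    subst hδ0
    have hr0 : r ≠ 0 := hne
    have hSW : ∀ y : ℝ, S 0 y = W y := fun y => S_zero W y
    have : (∫ y in (0:ℝ)..x, S r (x - y) * S 0 y) = ∫ y in (0:ℝ)..x, S r (x - y) * W y := by
      apply intervalIntegral.integral_congr
      intro y _
      beta_reduce
      rw [hSW]
    rw [this, F1 r x hr hx, hSW x]
    have h2 := F2 r x hr hx
    rw [sub_zero, eq_div_iff hr0]
    linear_combination -h2
  rcases eq_or_ne r 0 with hr0 | hr0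
  · -- r = 0
    subst hr0
    have hSW : ∀ y : ℝ, S 0 y = W y := fun y => S_zero W y
    have : (∫ y in (0:ℝ)..x, S 0 (x - y) * S δ y) = ∫ y in (0:ℝ)..x, W (x - y) * S δ y := by
      apply intervalIntegral.integral_congr
      intro y _
      beta_reduce
      rw [hSW]
    rw [this, F1' δ x hδ hx, hSW x]
    have h2 := F2 δ x hδ hx
    have hδ0' : δ ≠ 0 := fun h => hδ0 h
    have hsub : (0:ℝ) - δ ≠ 0 := by simpa using hδ0'
    rw [eq_div_iff hsub]
    linear_combination h2
  -- main case : r ≠ 0, δ ≠ 0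
  -- clamped continuous versions
  set c : ℝ → ℝ := fun y => min (max y 0) x with hc
  have hcc : Continuous c := (continuous_id.max continuous_const).min continuous_const
  have hcmem : ∀ y : ℝ, c y ∈ Set.Icc 0 x := fun y =>
    ⟨le_min (le_max_right _ _) hx, min_le_right _ _⟩
  have hceq : ∀ y ∈ Set.Icc (0:ℝ) x, c y = y := by
    intro y hy
    rw [hc]
    beta_reduce
    rw [max_eq_left hy.1, min_eq_left hy.2]
  set fr : ℝ → ℝ := (S r) ∘ c with hfr
  set fδ : ℝ → ℝ := (S δ) ∘ c with hfδ
  have hfrc : Continuous fr := (hcont r hr).comp_continuous hcc hcmem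
  have hfδc : Continuous fδ := (hcont δ hδ).comp_continuous hcc hcmem
  have hfreq : ∀ y ∈ Set.Icc (0:ℝ) x, fr y = S r y := fun y hy => by
    rw [hfr, Function.comp_apply, hceq y hy]
  have hfδeq : ∀ y ∈ Set.Icc (0:ℝ) x, fδ y = S δ y := fun y hy => by
    rw [hfδ, Function.comp_apply, hceq y hy]
  have huIcc : Set.uIcc (0:ℝ) x = Set.Icc 0 x := Set.uIcc_of_le hx
  set T := ∫ y in (0:ℝ)..x, S r (x - y) * S δ y with hT
  -- T in clamped form
  have hTc : T = ∫ y in (0:ℝ)..x, fr (x - y) * fδ y := by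
    apply intervalIntegral.integral_congr
    intro y hy
    beta_reduce
    rw [huIcc] at hy
    have hxy : x - y ∈ Set.Icc (0:ℝ) x := ⟨by linarith [hy.2], by linarith [hy.1]⟩
    rw [hfreq _ hxy, hfδeq _ hy]
  -- pointwise functional equation for fδ on [0, x]
  have hfδ_eq : ∀ y ∈ Set.Icc (0:ℝ) x,
      fδ y = W y + δ * ∫ z in (0:ℝ)..y, W (y - z) * fδ z := by
    intro y hy
    have hinner : (∫ z in (0:ℝ)..y, W (y - z) * fδ z)
        = ∫ z in (0:ℝ)..y, W (y - z) * S δ z := by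
      apply intervalIntegral.integral_congr
      intro z hz
      beta_reduce
      rw [Set.uIcc_of_le hy.1] at hz
      rw [hfδeq _ ⟨hz.1, hz.2.trans hy.2⟩]
    rw [hinner, F1' δ y hδ hy.1, hfδeq _ hy]
    exact F2 δ y hδ hy.1
  -- split T
  have hsplit : T = S1 r x
      + δ * ∫ y in (0:ℝ)..x, fr (x - y) * ∫ z in (0:ℝ)..y, W (y - z) * fδ z := by
    rw [hTc]
    have e1 : (∫ y in (0:ℝ)..x, fr (x - y) * fδ y)
        = ∫ y in (0:ℝ)..x, (fr (x - y) * W y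
            + δ * (fr (x - y) * ∫ z in (0:ℝ)..y, W (y - z) * fδ z)) := by
      apply intervalIntegral.integral_congr
      intro y hy
      beta_reduce
      rw [huIcc] at hy
      rw [hfδ_eq y hy]
      ring
    have hI : Continuous fun y => ∫ z in (0:ℝ)..y, W (y - z) * fδ z := by
      exact intervalIntegral.continuous_parametric_intervalIntegral_of_continuous
        (f := fun y z => W (y - z) * fδ z) (by fun_prop) continuous_id
    have i1 : IntervalIntegrable (fun y => fr (x - y) * W y) volume 0 x := by
      apply Continuous.intervalIntegrable; fun_prop
    have i2 : IntervalIntegrable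
        (fun y => δ * (fr (x - y) * ∫ z in (0:ℝ)..y, W (y - z) * fδ z)) volume 0 x := by
      apply Continuous.intervalIntegrable
      apply Continuous.mul continuous_const
      exact Continuous.mul (by fun_prop) hI
    rw [e1, intervalIntegral.integral_add i1 i2, intervalIntegral.integral_const_mul]
    congr 1
    have e2 : (∫ y in (0:ℝ)..x, fr (x - y) * W y) = ∫ y in (0:ℝ)..x, S r (x - y) * W y := by
      apply intervalIntegral.integral_congr
      intro y hy
      beta_reduce
      rw [huIcc] at hy
      have hxy : x - y ∈ Set.Icc (0:ℝ) x := ⟨by linarith [hy.2], by linarith [hy.1]⟩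
      rw [hfreq _ hxy]
    rw [e2, F1 r x hr hx]
  -- apply associativity
  have hassoc := conv_assoc fr W fδ hfrc hW hfδc x hx
  -- compute the right-hand side of assoc
  have hrhs : (∫ z in (0:ℝ)..x, (∫ u in (0:ℝ)..(x - z), fr (x - z - u) * W u) * fδ z)
      = ∫ z in (0:ℝ)..x, ((S r (x - z) - W (x - z)) / r) * S δ z := by
    apply intervalIntegral.integral_congr
    intro z hz
    beta_reduce
    rw [huIcc] at hz
    have hxz : (0:ℝ) ≤ x - z := by linarith [hz.2]
    have hinner : (∫ u in (0:ℝ)..(x - z), fr (x - z - u) * W u)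
        = ∫ u in (0:ℝ)..(x - z), S r (x - z - u) * W u := by
      apply intervalIntegral.integral_congr
      intro u hu
      beta_reduce
      rw [Set.uIcc_of_le hxz] at hu
      have : x - z - u ∈ Set.Icc (0:ℝ) x :=
        ⟨by linarith [hu.2], by linarith [hu.1, hz.1]⟩
      rw [hfreq _ this]
    rw [hinner, F1 r (x - z) hr hxz, hfδeq _ hz]
    have h2 := F2 r (x - z) hr hxz
    have : S1 r (x - z) = (S r (x - z) - W (x - z)) / r := by
      rw [eq_div_iff hr0]
      linear_combination -h2
    rw [this]
  -- integrability helpers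
  have hmaps : Set.MapsTo (fun z => x - z) (Set.Icc 0 x) (Set.Icc 0 x) := by
    intro z hz
    simp only [Set.mem_Icc] at hz ⊢
    constructor <;> linarith [hz.1, hz.2]
  have hSrcomp : ContinuousOn (fun z => S r (x - z)) (Set.Icc 0 x) :=
    (hcont r hr).comp ((continuous_const.sub continuous_id).continuousOn) hmaps
  have hlast : (∫ z in (0:ℝ)..x, ((S r (x - z) - W (x - z)) / r) * S δ z)
      = (T - S1 δ x) / r := by
    have e : ∀ z : ℝ, ((S r (x - z) - W (x - z)) / r) * S δ z
        = (1 / r) * (S r (x - z) * S δ z) - (1 / r) * (W (x - z) * S δ z) := by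
      intro z
      ring
    simp_rw [e]
    have i1 : IntervalIntegrable (fun z => (1 / r) * (S r (x - z) * S δ z)) volume 0 x := by
      have hco : ContinuousOn (fun z => (1 / r) * (S r (x - z) * S δ z)) (Set.uIcc 0 x) := by
        rw [huIcc]
        exact continuousOn_const.mul (hSrcomp.mul (hcont δ hδ))
      exact hco.intervalIntegrable
    have i2 : IntervalIntegrable (fun z => (1 / r) * (W (x - z) * S δ z)) volume 0 x := by
      have hco : ContinuousOn (fun z => (1 / r) * (W (x - z) * S δ z)) (Set.uIcc 0 x) := by
        rw [huIcc]
        exact continuousOn_const.mul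
          (((hW.comp (continuous_const.sub continuous_id)).continuousOn).mul (hcont δ hδ))
      exact hco.intervalIntegrable
    rw [intervalIntegral.integral_sub i1 i2, intervalIntegral.integral_const_mul,
      intervalIntegral.integral_const_mul, F1' δ x hδ hx, ← hT]
    ring
  -- final algebra
  have key0 : T = S1 r x + δ * ((T - S1 δ x) / r) := by
    conv_lhs => rw [hsplit]
    rw [hassoc, hrhs, hlast]
  have keym : r * T = r * S1 r x + δ * (T - S1 δ x) := by
    field_simp at key0
    linarith [key0]
  have h2r := F2 r x hr hx
  have h2δ := F2 δ x hδ hx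
  have hrδ : r - δ ≠ 0 := sub_ne_zero.mpr hne
  rw [eq_div_iff hrδ]
  linear_combination keym - h2r + h2δ
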